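/- Let E be a category with finite colimits and let X : P(Fin n) ⟶ E be a strongly cocartesian n-cube. Write K = X(∅) and k_i = X(∅ ⊆ {i}) : K ⟶ X({i}). Then for every U ⊆ Fin n, the following square is a pushout: top-left corner ∐_{i ∈ Fin n} K; top map the codiagonal ∇ : ∐_{i ∈ Fin n} K ⟶ K; left map the coproduct over i ∈ Fin n of the maps (k_i if i ∈ U, identity of K otherwise) into ∐_{i ∈ Fin n} σ_U(i) (where σ_U(i) = X({i}) if i ∈ U and σ_U(i) = K otherwise); right map X(∅ ⊆ U) : K ⟶ X(U); bottom map ∐_{i ∈ Fin n} σ_U(i) ⟶ X(U) whose i-th component is X({i} ⊆ U) : X({i}) ⟶ X(U) if i ∈ U and X(∅ ⊆ U) : K ⟶ X(U) otherwise. -/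

import Mathlib

open CategoryTheory Limits

namespace GoodwillieStmt10

set_option linter.unusedSectionVars false

variable {E : Type*} [Category E] [HasFiniteColimits E] {n : ℕ}

/-- `σ_U(i)` is `X({i})` if `i ∈ U` and `K = X(∅)` otherwise. -/
def sigmaObj (X : Finset (Fin n) ⥤ E) (U : Finset (Fin n)) (i : Fin n) : E :=
  if i ∈ U then X.obj {i} else X.obj ∅

/-- The `i`-th component `K ⟶ σ_U(i)` of the left map: `k_i = X(∅ ⊆ {i})` if `i ∈ U`,
identity of `K` otherwise. -/
def lmap (X : Finset (Fin n) ⥤ E) (U : Finset (Fin n)) (i : Fin n) :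
    X.obj ∅ ⟶ sigmaObj X U i :=
  if h : i ∈ U then
    X.map (homOfLE (Finset.empty_subset {i})) ≫
      eqToHom (show X.obj {i} = sigmaObj X U i by simp [sigmaObj, h])
  else eqToHom (by simp [sigmaObj, h])

/-- The `i`-th component `σ_U(i) ⟶ X(U)` of the bottom map: `X({i} ⊆ U)` if `i ∈ U`,
`X(∅ ⊆ U)` otherwise. -/
def bmap (X : Finset (Fin n) ⥤ E) (U : Finset (Fin n)) (i : Fin n) :
    sigmaObj X U i ⟶ X.obj U :=
  if h : i ∈ U then
    eqToHom (show sigmaObj X U i = X.obj {i} by simp [sigmaObj, h]) ≫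
      X.map (homOfLE (Finset.singleton_subset_iff.mpr h))
  else
    eqToHom (show sigmaObj X U i = X.obj ∅ by simp [sigmaObj, h]) ≫
      X.map (homOfLE (Finset.empty_subset U))

/-- Auxiliary: equality of parallel maps in the poset diagram. -/
lemma mapeq (X : Finset (Fin n) ⥤ E) {A B : Finset (Fin n)} (f g : A ⟶ B) :
    X.map f = X.map g := by congr 1; exact Subsingleton.elim f g

lemma mapeq₂ (X : Finset (Fin n) ⥤ E) {A B C : Finset (Fin n)} (h1 : A ≤ B) (h2 : B ≤ C)
    (h3 : A ≤ C) : X.map (homOfLE h3) = X.map (homOfLE h1) ≫ X.map (homOfLE h2) := by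
  rw [← X.map_comp]; congr 1

/-- The `i`-th component `σ_V(i) ⟶ σ_{V∪{j}}(i)`. -/
def tmap (X : Finset (Fin n) ⥤ E) (V : Finset (Fin n)) (j i : Fin n) :
    sigmaObj X V i ⟶ sigmaObj X (insert j V) i :=
  if h : i = j ∧ j ∉ V then
    eqToHom (show sigmaObj X V i = X.obj ∅ by simp [sigmaObj, h.1, h.2]) ≫
      X.map (homOfLE (Finset.empty_subset {i})) ≫
      eqToHom (show X.obj {i} = sigmaObj X (insert j V) i by
        simp [sigmaObj, h.1, Finset.mem_insert_self])
  else
    eqToHom (show sigmaObj X V i = sigmaObj X (insert j V) i by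
      unfold sigmaObj
      by_cases h1 : i = j
      · subst h1
        have hv : i ∈ V := by tauto
        simp [hv, Finset.mem_insert_self]
      · simp [Finset.mem_insert, h1])

lemma lmap_comp (X : Finset (Fin n) ⥤ E) (V : Finset (Fin n)) {j : Fin n} (hj : j ∉ V)
    (i : Fin n) : lmap X (insert j V) i = lmap X V i ≫ tmap X V j i := by
  by_cases h1 : i = j
  · subst h1
    rw [lmap, dif_pos (Finset.mem_insert_self i V), lmap, dif_neg hj, tmap, dif_pos ⟨rfl, hj⟩]
    simp
  · by_cases h2 : i ∈ V
    · rw [lmap, dif_pos (Finset.mem_insert_of_mem h2), lmap, dif_pos h2, tmap,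
        dif_neg (by tauto)]
      simp
    · rw [lmap, dif_neg (by simp [Finset.mem_insert, h1, h2]), lmap, dif_neg h2, tmap,
        dif_neg (by tauto)]
      simp

lemma bmap_comp (X : Finset (Fin n) ⥤ E) (V : Finset (Fin n)) {j : Fin n} (hj : j ∉ V)
    (i : Fin n) :
    tmap X V j i ≫ bmap X (insert j V) i
      = bmap X V i ≫ X.map (homOfLE (Finset.subset_insert j V)) := by
  by_cases h1 : i = j
  · subst h1
    rw [tmap, dif_pos ⟨rfl, hj⟩, bmap, dif_pos (Finset.mem_insert_self i V), bmap, dif_neg hj]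
    simp only [Category.assoc, eqToHom_trans_assoc, eqToHom_refl, Category.id_comp]
    rw [← X.map_comp, ← X.map_comp]
    congr 1
  · by_cases h2 : i ∈ V
    · rw [tmap, dif_neg (by tauto), bmap, dif_pos (Finset.mem_insert_of_mem h2), bmap,
        dif_pos h2]
      simp only [Category.assoc, eqToHom_trans_assoc]
      rw [← X.map_comp]
      congr 1
    · rw [tmap, dif_neg (by tauto), bmap, dif_neg (by simp [Finset.mem_insert, h1, h2]), bmap,
        dif_neg h2]
      simp only [Category.assoc, eqToHom_trans_assoc]
      rw [← X.map_comp]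
      congr 1

/-- Iterated cocartesianness: the square `∅, {j}, V, V ∪ {j}` is a pushout. -/
lemma cube (X : Finset (Fin n) ⥤ E)
    (hX : ∀ (U : Finset (Fin n)) (i j : Fin n), i ≠ j → i ∉ U → j ∉ U →
      IsPushout (X.map (homOfLE (Finset.subset_insert i U)))
        (X.map (homOfLE (Finset.subset_insert j U)))
        (X.map (homOfLE (Finset.subset_insert j (insert i U))))
        (X.map (homOfLE (Finset.insert_subset_insert j (Finset.subset_insert i U)))))
    (j : Fin n) (V : Finset (Fin n)) :
    j ∉ V → ∀ {B : Finset (Fin n)}, B = insert j V →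
      ∀ (p2 : (∅ : Finset (Fin n)) ≤ V) (p3 : ({j} : Finset (Fin n)) ≤ B) (p4 : V ≤ B),
      IsPushout (X.map (homOfLE (Finset.empty_subset {j}))) (X.map (homOfLE p2))
        (X.map (homOfLE p3)) (X.map (homOfLE p4)) := by
  induction V using Finset.induction_on with
  | empty =>
    intro _ B hB p2 p3 p4
    rw [show insert j (∅ : Finset (Fin n)) = {j} from rfl] at hB
    subst hB
    have h1 : IsIso (X.map (homOfLE p2)) := by
      rw [show homOfLE p2 = 𝟙 (∅ : Finset (Fin n)) from Subsingleton.elim _ _, X.map_id]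
      infer_instance
    have h2 : IsIso (X.map (homOfLE p3)) := by
      rw [show homOfLE p3 = 𝟙 ({j} : Finset (Fin n)) from Subsingleton.elim _ _, X.map_id]
      infer_instance
    exact IsPushout.of_vert_isIso ⟨by rw [← X.map_comp, ← X.map_comp]; congr 1⟩
  | @insert i W hiW IH =>
    intro hj B hB p2 p3 p4
    have hji : j ≠ i := by rintro rfl; exact hj (Finset.mem_insert_self j W)
    have hjW : j ∉ W := fun h => hj (Finset.mem_insert_of_mem h)
    rw [Finset.insert_comm] at hB
    subst hB
    have s := IH hjW rfl (Finset.empty_subset W)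
      (Finset.singleton_subset_iff.mpr (Finset.mem_insert_self j W))
      (Finset.subset_insert j W)
    have t := hX W j i hji hjW hiW
    have := s.paste_vert t
    rw [← X.map_comp, ← X.map_comp] at this
    convert this using 2
    all_goals exact Subsingleton.elim _ _

/-- The lower square: pushing out along the `j`-th coproduct component. -/
lemma squareB (X : Finset (Fin n) ⥤ E)
    (hX : ∀ (U : Finset (Fin n)) (i j : Fin n), i ≠ j → i ∉ U → j ∉ U →
      IsPushout (X.map (homOfLE (Finset.subset_insert i U)))
        (X.map (homOfLE (Finset.subset_insert j U)))
        (X.map (homOfLE (Finset.subset_insert j (insert i U))))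
        (X.map (homOfLE (Finset.insert_subset_insert j (Finset.subset_insert i U)))))
    (V : Finset (Fin n)) {j : Fin n} (hj : j ∉ V) :
    IsPushout (Sigma.desc (bmap X V)) (Limits.Sigma.map (tmap X V j))
      (X.map (homOfLE (Finset.subset_insert j V)))
      (Sigma.desc (bmap X (insert j V))) := by
  have ej : sigmaObj X (insert j V) j = X.obj {j} := by
    simp [sigmaObj, Finset.mem_insert_self]
  have hcube := cube X hX j V hj rfl (Finset.empty_subset V)
    (Finset.singleton_subset_iff.mpr (Finset.mem_insert_self j V)) (Finset.subset_insert j V)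
  have comm : Sigma.desc (bmap X V) ≫ X.map (homOfLE (Finset.subset_insert j V))
      = Limits.Sigma.map (tmap X V j) ≫ Sigma.desc (bmap X (insert j V)) := by
    ext i
    simp only [colimit.ι_desc_assoc, Cofan.mk_pt, Cofan.mk_ι_app, ι_colimMap_assoc,
      Discrete.natTrans_app, colimit.ι_desc]
    rw [Sigma.ι_map_assoc, colimit.ι_desc]
    exact (bmap_comp X V hj i).symm
  apply IsPushout.of_isColimit' ⟨comm⟩
  have hs : ∀ (s : PushoutCocone (Sigma.desc (bmap X V)) (Limits.Sigma.map (tmap X V j)))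
      (i : Fin n), bmap X V i ≫ s.inl
        = tmap X V j i ≫ Sigma.ι (sigmaObj X (insert j V)) i ≫ s.inr := fun s i => by
    have h := Sigma.ι (sigmaObj X V) i ≫= s.condition
    simpa using h
  have hw : ∀ (s : PushoutCocone (Sigma.desc (bmap X V)) (Limits.Sigma.map (tmap X V j))),
      X.map (homOfLE (Finset.empty_subset {j}))
          ≫ eqToHom ej.symm ≫ Sigma.ι (sigmaObj X (insert j V)) j ≫ s.inr
        = X.map (homOfLE (Finset.empty_subset V)) ≫ s.inl := fun s => by
    have h := hs s j
    rw [bmap, dif_neg hj, tmap, dif_pos ⟨rfl, hj⟩] at h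
    simp only [Category.assoc] at h
    exact ((cancel_epi (eqToHom (show sigmaObj X V j = X.obj ∅ by
      simp [sigmaObj, hj]))).mp h).symm
  refine PushoutCocone.IsColimit.mk comm
    (fun s => hcube.desc (eqToHom ej.symm ≫ Sigma.ι (sigmaObj X (insert j V)) j ≫ s.inr)
      s.inl (hw s)) (fun s => hcube.inr_desc _ _ _) ?_ ?_
  · -- fac_right
    intro s
    ext i
    simp only [colimit.ι_desc_assoc, Cofan.mk_pt, Cofan.mk_ι_app]
    by_cases h1 : i = j
    · subst h1
      rw [bmap, dif_pos (Finset.mem_insert_self i V)]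
      simp only [Category.assoc, IsPushout.inl_desc]
      simp [eqToHom_trans_assoc]
    · haveI : IsIso (tmap X V j i) := by
        rw [tmap, dif_neg (by tauto)]; infer_instance
      rw [← cancel_epi (tmap X V j i), ← Category.assoc, bmap_comp X V hj i,
        Category.assoc, IsPushout.inr_desc]
      exact hs s i
  · -- uniq
    intro s m hm1 hm2
    apply hcube.hom_ext
    · have h2j := Sigma.ι (sigmaObj X (insert j V)) j ≫= hm2
      simp only [colimit.ι_desc_assoc, Cofan.mk_pt, Cofan.mk_ι_app] at h2j
      rw [bmap, dif_pos (Finset.mem_insert_self j V), Category.assoc] at h2j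
      rw [IsPushout.inl_desc, ← h2j]
      rw [← Category.assoc, ← Category.assoc, eqToHom_trans, eqToHom_refl, Category.id_comp]
    · rw [IsPushout.inr_desc]
      exact hm1

theorem goodwillie_stmt_10 (X : Finset (Fin n) ⥤ E)
    (hX : ∀ (U : Finset (Fin n)) (i j : Fin n), i ≠ j → i ∉ U → j ∉ U →
      IsPushout (X.map (homOfLE (Finset.subset_insert i U)))
        (X.map (homOfLE (Finset.subset_insert j U)))
        (X.map (homOfLE (Finset.subset_insert j (insert i U))))
        (X.map (homOfLE (Finset.insert_subset_insert j (Finset.subset_insert i U)))))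
    (U : Finset (Fin n)) :
    IsPushout
      (Sigma.desc fun _ : Fin n => 𝟙 (X.obj ∅))
      (Limits.Sigma.map (lmap X U))
      (X.map (homOfLE (Finset.empty_subset U)))
      (Sigma.desc (bmap X U)) := by
  induction U using Finset.induction_on with
  | empty =>
    have h1 : ∀ i : Fin n, IsIso (lmap X (∅ : Finset (Fin n)) i) := fun i => by
      rw [lmap, dif_neg (Finset.notMem_empty i)]; infer_instance
    haveI := h1
    have h2 : IsIso (Limits.Sigma.map (lmap X (∅ : Finset (Fin n)))) := inferInstance
    have h3 : IsIso (X.map (homOfLE (Finset.empty_subset (∅ : Finset (Fin n))))) := by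
      rw [show homOfLE (Finset.empty_subset (∅ : Finset (Fin n)))
          = 𝟙 (∅ : Finset (Fin n)) from Subsingleton.elim _ _, X.map_id]
      infer_instance
    refine IsPushout.of_vert_isIso ⟨?_⟩
    ext i
    simp only [colimit.ι_desc_assoc, Cofan.mk_pt, Cofan.mk_ι_app, Category.id_comp,
      ι_colimMap_assoc, Discrete.natTrans_app, colimit.ι_desc]
    simp only [Sigma.ι_map_assoc, colimit.ι_desc, Cofan.mk_pt, Cofan.mk_ι_app]
    rw [lmap, dif_neg (Finset.notMem_empty i), bmap, dif_neg (Finset.notMem_empty i)]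
    simp
  | @insert j V hjV IH =>
    have e1 : Limits.Sigma.map (lmap X (insert j V))
        = Limits.Sigma.map (lmap X V) ≫ Limits.Sigma.map (tmap X V j) := by
      ext i
      simp [lmap_comp X V hjV i]
    have e2 : X.map (homOfLE (Finset.empty_subset (insert j V)))
        = X.map (homOfLE (Finset.empty_subset V))
            ≫ X.map (homOfLE (Finset.subset_insert j V)) := mapeq₂ X _ _ _
    rw [e1, e2]
    exact IH.paste_vert (squareB X hX V hjV)

end GoodwillieStmt10
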